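/- For all integers n, k ≥ 1, C(n−1, k−1)² = ∑_{r≥1} ∑ f(m_1,k_1) f(m_2,k_2) ⋯ f(m_r,k_r), where the inner sum ranges over all r-tuples of positive integers (m_1,…,m_r) with m_1+⋯+m_r = n and (k_1,…,k_r) with k_1+⋯+k_r = k (the sum over r is finite since necessarily r ≤ k). -/

import Mathlib

/-- `b : Fin k → ℕ` is a composition of `n` into `k` (positive) parts. -/
def IsComposition (n k : ℕ) (b : Fin k → ℕ) : Prop :=
  (∀ i, 0 < b i) ∧ ∑ i, b i = n

/-- An ordered pair of compositions of `n` into `k` parts is irreducible if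
their partial sums disagree at every index `j = 1, …, k-1`. -/
def IsIrreduciblePair (n k : ℕ) (b b' : Fin k → ℕ) : Prop :=
  IsComposition n k b ∧ IsComposition n k b' ∧
    ∀ j : ℕ, 1 ≤ j → j < k →
      ∑ i ∈ Finset.univ.filter (fun i : Fin k => (i : ℕ) < j), b i ≠
        ∑ i ∈ Finset.univ.filter (fun i : Fin k => (i : ℕ) < j), b' i

/-- `f n k` is the number of irreducible ordered pairs of compositions of `n`
into `k` parts. -/
noncomputable def numIrreduciblePairsK (n k : ℕ) : ℕ :=
  Nat.card {p : (Fin k → ℕ) × (Fin k → ℕ) // IsIrreduciblePair n k p.1 p.2}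

open Finset

/-! Partial sums -/

def PS {k : ℕ} (t : ℕ) (b : Fin k → ℕ) : ℕ :=
  ∑ i ∈ Finset.univ.filter (fun i : Fin k => (i : ℕ) < t), b i

lemma PS_zero {k : ℕ} (b : Fin k → ℕ) : PS 0 b = 0 := by
  simp [PS]

lemma PS_succ {k : ℕ} (t : ℕ) (b : Fin k → ℕ) :
    PS (t + 1) b = PS t b + (if h : t < k then b ⟨t, h⟩ else 0) := by
  unfold PS
  by_cases h : t < k
  · rw [dif_pos h]
    have : Finset.univ.filter (fun i : Fin k => (i : ℕ) < t + 1)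
        = insert ⟨t, h⟩ (Finset.univ.filter (fun i : Fin k => (i : ℕ) < t)) := by
      ext i
      simp only [Finset.mem_filter, Finset.mem_univ, true_and, Finset.mem_insert, Fin.ext_iff,
        Fin.val_mk]
      omega
    have hni : (⟨t, h⟩ : Fin k) ∉ Finset.univ.filter (fun i : Fin k => (i : ℕ) < t) := by
      simp only [Finset.mem_filter, Finset.mem_univ, true_and, Fin.val_mk]
      omega
    rw [this, Finset.sum_insert hni, add_comm]
  · rw [dif_neg h]
    rw [add_zero]
    apply Finset.sum_congr _ (fun _ _ => rfl)
    apply Finset.filter_congr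
    intro i _
    have := i.isLt
    omega

lemma PS_of_ge {k : ℕ} {t : ℕ} (ht : k ≤ t) (b : Fin k → ℕ) : PS t b = ∑ i, b i := by
  unfold PS
  rw [Finset.filter_true_of_mem]
  intro i _
  exact lt_of_lt_of_le i.isLt ht

lemma PS_mono {k : ℕ} {t t' : ℕ} (h : t ≤ t') (b : Fin k → ℕ) : PS t b ≤ PS t' b := by
  apply Finset.sum_le_sum_of_subset
  apply Finset.monotone_filter_right
  intro i hi
  omega

/-! Combining and splitting tuples -/

def combine {k j : ℕ} (hj : j ≤ k) (a : Fin j → ℕ) (c : Fin (k - j) → ℕ) : Fin k → ℕ :=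
  fun i => if h : (i : ℕ) < j then a ⟨i, h⟩ else c ⟨(i : ℕ) - j, by omega⟩

lemma combine_pos {k j : ℕ} (hj : j ≤ k) (a : Fin j → ℕ) (c : Fin (k - j) → ℕ)
    (i : Fin k) (h : (i : ℕ) < j) : combine hj a c i = a ⟨i, h⟩ := by
  unfold combine; rw [dif_pos h]

lemma combine_neg {k j : ℕ} (hj : j ≤ k) (a : Fin j → ℕ) (c : Fin (k - j) → ℕ)
    (i : Fin k) (h : ¬ (i : ℕ) < j) :
    combine hj a c i = c ⟨(i : ℕ) - j, by omega⟩ := by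
  unfold combine; rw [dif_neg h]

lemma PS_combine_le {k j : ℕ} (hj : j ≤ k) (a : Fin j → ℕ) (c : Fin (k - j) → ℕ)
    {t : ℕ} (ht : t ≤ j) : PS t (combine hj a c) = PS t a := by
  induction t with
  | zero => rw [PS_zero, PS_zero]
  | succ t ih =>
    rw [PS_succ, PS_succ, ih (by omega)]
    have h1 : t < k := by omega
    have h2 : t < j := by omega
    rw [dif_pos h1, dif_pos h2, combine_pos hj a c ⟨t, h1⟩ (by simpa using h2)]

lemma PS_combine_ge {k j : ℕ} (hj : j ≤ k) (a : Fin j → ℕ) (c : Fin (k - j) → ℕ)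
    {t : ℕ} (ht : j ≤ t) : PS t (combine hj a c) = (∑ i, a i) + PS (t - j) c := by
  induction t, ht using Nat.le_induction with
  | base =>
    rw [PS_combine_le hj a c le_rfl, PS_of_ge le_rfl, Nat.sub_self, PS_zero, add_zero]
  | succ t ht ih =>
    rw [PS_succ, ih, Nat.succ_sub ht, PS_succ, add_assoc]
    congr 1
    by_cases h : t < k
    · rw [dif_pos h, dif_pos (show t - j < k - j by omega),
        combine_neg hj a c ⟨t, h⟩ (by simp only [Fin.val_mk]; omega)]
    · rw [dif_neg h, dif_neg (show ¬ t - j < k - j by omega)]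

lemma sum_combine {k j : ℕ} (hj : j ≤ k) (a : Fin j → ℕ) (c : Fin (k - j) → ℕ) :
    ∑ i, combine hj a c i = (∑ i, a i) + ∑ i, c i := by
  rw [← PS_of_ge (le_refl k), PS_combine_ge hj a c hj, PS_of_ge (le_refl (k - j))]

lemma combine_extract {k j : ℕ} (hj : j ≤ k) (b : Fin k → ℕ) :
    combine hj (fun i : Fin j => b ⟨i, by omega⟩)
      (fun i : Fin (k - j) => b ⟨j + i, by omega⟩) = b := by
  funext i
  by_cases h : (i : ℕ) < j
  · rw [combine_pos hj _ _ i h]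
  · rw [combine_neg hj _ _ i h]
    congr 1
    exact Fin.ext (by simp only [Fin.val_mk]; omega)

lemma combine_left {k j : ℕ} (hj : j ≤ k) (a : Fin j → ℕ) (c : Fin (k - j) → ℕ)
    (i : Fin j) : combine hj a c ⟨i, by omega⟩ = a i := by
  rw [combine_pos hj a c _ (by simp only [Fin.val_mk]; exact i.isLt)]

lemma combine_right {k j : ℕ} (hj : j ≤ k) (a : Fin j → ℕ) (c : Fin (k - j) → ℕ)
    (i : Fin (k - j)) : combine hj a c ⟨j + i, by omega⟩ = c i := by
  rw [combine_neg hj a c _ (by simp only [Fin.val_mk]; omega)]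
  congr 1
  exact Fin.ext (by simp only [Fin.val_mk]; omega)

/-! Compositions as finsets -/


def compFinset (n k : ℕ) : Finset (Fin k → ℕ) :=
  (Fintype.piFinset fun _ => Finset.Icc 1 n).filter fun b => ∑ i, b i = n

lemma mem_compFinset {n k : ℕ} {b : Fin k → ℕ} :
    b ∈ compFinset n k ↔ IsComposition n k b := by
  unfold compFinset IsComposition
  simp only [Finset.mem_filter, Fintype.mem_piFinset, Finset.mem_Icc]
  constructor
  · rintro ⟨h1, h2⟩
    exact ⟨fun i => (h1 i).1, h2⟩
  · rintro ⟨h1, h2⟩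
    refine ⟨fun i => ⟨h1 i, ?_⟩, h2⟩
    rw [← h2]
    exact Finset.single_le_sum (f := b) (fun _ _ => Nat.zero_le _) (Finset.mem_univ i)

lemma compFinset_zero_zero : compFinset 0 0 = {fun i => i.elim0} := by
  ext b
  simp only [mem_compFinset, IsComposition, Finset.mem_singleton]
  constructor
  · intro _
    funext i
    exact i.elim0
  · rintro rfl
    exact ⟨fun i => i.elim0, by simp⟩

lemma compFinset_pos_zero {n : ℕ} (hn : 1 ≤ n) : compFinset n 0 = ∅ := by
  apply Finset.eq_empty_of_forall_notMem
  intro b hb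
  rw [mem_compFinset] at hb
  have := hb.2
  simp at this
  omega

lemma compFinset_zero_pos {k : ℕ} (hk : 1 ≤ k) {n : ℕ} (hn : n = 0) :
    compFinset n k = ∅ := by
  subst hn
  apply Finset.eq_empty_of_forall_notMem
  intro b hb
  rw [mem_compFinset] at hb
  have h1 := hb.1 ⟨0, hk⟩
  have h2 : b ⟨0, hk⟩ ≤ ∑ i, b i :=
    Finset.single_le_sum (f := b) (fun _ _ => Nat.zero_le _) (Finset.mem_univ _)
  have h0 := hb.2
  omega

lemma compFinset_one {n : ℕ} (hn : 1 ≤ n) : compFinset n 1 = {fun _ => n} := by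
  ext b
  simp only [mem_compFinset, IsComposition, Finset.mem_singleton, Fin.sum_univ_one]
  constructor
  · rintro ⟨h1, h2⟩
    funext i
    rw [Subsingleton.elim i 0]
    exact h2
  · rintro rfl
    exact ⟨fun _ => hn, rfl⟩

lemma card_compFinset_succ {n k : ℕ} (hk : 1 ≤ k) :
    (compFinset n (k + 1)).card = ∑ m ∈ Finset.Icc 1 (n - 1), (compFinset (n - m) k).card := by
  have hmaps : ∀ b ∈ compFinset n (k + 1), b 0 ∈ Finset.Icc 1 (n - 1) := by
    intro b hb
    rw [mem_compFinset] at hb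
    obtain ⟨h1, h2⟩ := hb
    rw [Fin.sum_univ_succ] at h2
    have h3 := h1 0
    have h4 := h1 ⟨1, by omega⟩
    have h5 : b ⟨1, by omega⟩ ≤ ∑ i : Fin k, b (Fin.succ i) := by
      have : (⟨0, by omega⟩ : Fin k).succ = ⟨1, by omega⟩ := by
        exact Fin.ext (by simp)
      rw [← this]
      exact Finset.single_le_sum (f := fun i : Fin k => b (Fin.succ i))
        (fun _ _ => Nat.zero_le _) (Finset.mem_univ _)
    simp only [Finset.mem_Icc]
    omega
  rw [Finset.card_eq_sum_card_fiberwise hmaps]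
  apply Finset.sum_congr rfl
  intro m hm
  simp only [Finset.mem_Icc] at hm
  refine Finset.card_bij' (fun b _ => fun i : Fin k => b i.succ)
    (fun c _ => Fin.cons m c) ?_ ?_ ?_ ?_
  · intro b hb
    simp only [Finset.mem_filter, mem_compFinset, IsComposition] at hb
    obtain ⟨⟨h1, h2⟩, h3⟩ := hb
    rw [mem_compFinset]
    refine ⟨fun i => h1 i.succ, ?_⟩
    rw [Fin.sum_univ_succ, h3] at h2
    show ∑ i : Fin k, b i.succ = n - m
    omega
  · intro c hc
    rw [mem_compFinset] at hc
    obtain ⟨h1, h2⟩ := hc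
    simp only [Finset.mem_filter, mem_compFinset, IsComposition]
    refine ⟨⟨?_, ?_⟩, by simp⟩
    · intro i
      rcases Fin.eq_zero_or_eq_succ i with rfl | ⟨j, rfl⟩
      · simpa using (show 0 < m from hm.1)
      · simpa using h1 j
    · rw [Fin.sum_univ_succ]
      simp only [Fin.cons_zero, Fin.cons_succ]
      rw [h2]
      omega
  · intro b hb
    simp only [Finset.mem_filter] at hb
    funext i
    rcases Fin.eq_zero_or_eq_succ i with rfl | ⟨j, rfl⟩
    · simpa using hb.2.symm
    · simp
  · intro c _
    funext i
    simp

lemma card_compFinset {n k : ℕ} (hn : 1 ≤ n) (hk : 1 ≤ k) :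
    (compFinset n k).card = (n - 1).choose (k - 1) := by
  induction k generalizing n with
  | zero => omega
  | succ k ih =>
    rcases Nat.eq_zero_or_pos k with rfl | hk'
    · rw [compFinset_one hn]
      simp
    · rw [card_compFinset_succ hk']
      have : ∀ m ∈ Finset.Icc 1 (n - 1), (compFinset (n - m) k).card
          = (n - m - 1).choose (k - 1) := by
        intro m hm
        simp only [Finset.mem_Icc] at hm
        exact ih (by omega) hk' 
      rw [Finset.sum_congr rfl this]
      -- ∑_{m=1}^{n-1} choose (n-m-1) (k-1) = choose (n-1) k
      have hre : ∑ m ∈ Finset.Icc 1 (n - 1), (n - m - 1).choose (k - 1)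
          = ∑ i ∈ Finset.range (n - 1), (i).choose (k - 1) := by
        apply Finset.sum_nbij' (i := fun m => n - m - 1) (j := fun i => n - i - 1)
        · intro m hm
          simp only [Finset.mem_Icc] at hm
          simp only [Finset.mem_range]
          omega
        · intro i hi
          simp only [Finset.mem_range] at hi
          simp only [Finset.mem_Icc]
          omega
        · intro m hm
          simp only [Finset.mem_Icc] at hm
          omega
        · intro i hi
          simp only [Finset.mem_range] at hi
          omega
        · intro m hm
          rfl
      rw [hre]
      have := Nat.sum_Icc_choose (n - 2) (k - 1)
      have hrange : Finset.range (n - 1) = Finset.Ico 0 (n - 1) := by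
        rw [Finset.range_eq_Ico]
      rcases Nat.lt_or_ge n 2 with h2 | h2
      · interval_cases n
        simp [Nat.choose_eq_zero_of_lt, hk']
      · have : ∑ i ∈ Finset.range (n - 1), i.choose (k - 1)
            = ∑ i ∈ Finset.Icc (k - 1) (n - 2), i.choose (k - 1) := by
          rw [Finset.range_eq_Ico]
          rw [← Finset.Ico_add_one_right_eq_Icc, show n - 2 + 1 = n - 1 from by omega]
          symm
          apply Finset.sum_subset
          · intro x hx
            simp only [Finset.mem_Icc, Finset.mem_Ico] at *
            omega
          · intro x hx1 hx2
            simp only [Finset.mem_Icc, Finset.mem_Ico] at *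
            exact Nat.choose_eq_zero_of_lt (by omega)
        rw [this, Nat.sum_Icc_choose]
        congr 1 <;> omega

/-! Pairs and irreducible pairs -/


lemma isIrreduciblePair_iff {n k : ℕ} {b b' : Fin k → ℕ} :
    IsIrreduciblePair n k b b' ↔
      IsComposition n k b ∧ IsComposition n k b' ∧
        ∀ j : ℕ, 1 ≤ j → j < k → PS j b ≠ PS j b' := Iff.rfl

def pairFinset (n k : ℕ) : Finset ((Fin k → ℕ) × (Fin k → ℕ)) :=
  compFinset n k ×ˢ compFinset n k

lemma mem_pairFinset {n k : ℕ} {p : (Fin k → ℕ) × (Fin k → ℕ)} :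
    p ∈ pairFinset n k ↔ IsComposition n k p.1 ∧ IsComposition n k p.2 := by
  unfold pairFinset
  simp [Finset.mem_product, mem_compFinset]

def irrFinset (n k : ℕ) : Finset ((Fin k → ℕ) × (Fin k → ℕ)) :=
  (pairFinset n k).filter fun p => ∀ j : ℕ, 1 ≤ j → j < k → PS j p.1 ≠ PS j p.2

lemma mem_irrFinset {n k : ℕ} {p : (Fin k → ℕ) × (Fin k → ℕ)} :
    p ∈ irrFinset n k ↔ IsIrreduciblePair n k p.1 p.2 := by
  unfold irrFinset
  rw [Finset.mem_filter, mem_pairFinset, isIrreduciblePair_iff]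
  tauto

/-! The first cut point -/

noncomputable def cutF {k : ℕ} (p : (Fin k → ℕ) × (Fin k → ℕ)) : ℕ :=
  sInf {j | 1 ≤ j ∧ PS j p.1 = PS j p.2}

lemma cut_facts {n k : ℕ} (hk : 1 ≤ k) {p : (Fin k → ℕ) × (Fin k → ℕ)}
    (h1 : IsComposition n k p.1) (h2 : IsComposition n k p.2) :
    1 ≤ cutF p ∧ cutF p ≤ k ∧ PS (cutF p) p.1 = PS (cutF p) p.2 ∧
      ∀ t, 1 ≤ t → t < cutF p → PS t p.1 ≠ PS t p.2 := by
  have hkS : k ∈ {j | 1 ≤ j ∧ PS j p.1 = PS j p.2} :=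
    ⟨hk, by rw [PS_of_ge le_rfl, PS_of_ge le_rfl, h1.2, h2.2]⟩
  have hmem := Nat.sInf_mem (⟨k, hkS⟩ : Set.Nonempty _)
  refine ⟨hmem.1, Nat.sInf_le hkS, hmem.2, fun t ht1 ht2 heq => ?_⟩
  have hle : cutF p ≤ t := Nat.sInf_le ⟨ht1, heq⟩
  omega

lemma cut_eq_of {k : ℕ} {p : (Fin k → ℕ) × (Fin k → ℕ)} {j : ℕ} (hj : 1 ≤ j)
    (h1 : PS j p.1 = PS j p.2) (h2 : ∀ t, 1 ≤ t → t < j → PS t p.1 ≠ PS t p.2) :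
    cutF p = j := by
  have hle : cutF p ≤ j := Nat.sInf_le ⟨hj, h1⟩
  rcases Nat.lt_or_ge (cutF p) j with hlt | hge
  · exfalso
    have hmem := Nat.sInf_mem (⟨j, hj, h1⟩ : Set.Nonempty {j | 1 ≤ j ∧ PS j p.1 = PS j p.2})
    exact h2 _ hmem.1 hlt hmem.2
  · omega

lemma PS_one {k : ℕ} (hk : 1 ≤ k) (b : Fin k → ℕ) : PS 1 b = b ⟨0, hk⟩ := by
  rw [show (1 : ℕ) = 0 + 1 from rfl, PS_succ, PS_zero, dif_pos (show 0 < k from hk), zero_add]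

/-! The key fiber counting lemma -/

lemma card_fiber {n k m j : ℕ} (hj1 : 1 ≤ j) (hjk : j ≤ k) (hm1 : 1 ≤ m) (hmn : m ≤ n) :
    ((pairFinset n k).filter
        (fun p => (PS (cutF p) p.1, cutF p) = (m, j))).card
      = (irrFinset m j).card * (pairFinset (n - m) (k - j)).card := by
  have hk : 1 ≤ k := le_trans hj1 hjk
  rw [← Finset.card_product]
  refine Finset.card_bij'
    (fun p _ => ((fun i : Fin j => p.1 ⟨(i : ℕ), lt_of_lt_of_le i.isLt hjk⟩,
                  fun i : Fin j => p.2 ⟨(i : ℕ), lt_of_lt_of_le i.isLt hjk⟩),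
                 (fun i : Fin (k - j) => p.1 ⟨j + (i : ℕ), by have := i.isLt; omega⟩,
                  fun i : Fin (k - j) => p.2 ⟨j + (i : ℕ), by have := i.isLt; omega⟩)))
    (fun q _ => (combine hjk q.1.1 q.2.1, combine hjk q.1.2 q.2.2)) ?_ ?_ ?_ ?_
  · -- forward membership
    intro p hp
    simp only [Finset.mem_filter, mem_pairFinset, Prod.mk.injEq] at hp
    obtain ⟨⟨hc1, hc2⟩, hPSm, hcut⟩ := hp
    obtain ⟨hcut1, hcutk, hcuteq, hcutmin⟩ := cut_facts hk hc1 hc2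
    rw [hcut] at hPSm hcuteq hcutmin
    -- rewrite p.1 and p.2 as combines
    have he1 := combine_extract hjk p.1
    have he2 := combine_extract hjk p.2
    have hPS1 : ∀ t ≤ j, PS t p.1 = PS t (fun i : Fin j => p.1 ⟨(i : ℕ), by omega⟩) := by
      intro t ht
      conv_lhs => rw [← he1]
      rw [PS_combine_le hjk _ _ ht]
    have hPS2 : ∀ t ≤ j, PS t p.2 = PS t (fun i : Fin j => p.2 ⟨(i : ℕ), by omega⟩) := by
      intro t ht
      conv_lhs => rw [← he2]
      rw [PS_combine_le hjk _ _ ht]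
    have hsum1 : (∑ i, (fun i : Fin j => p.1 ⟨(i : ℕ), by omega⟩) i) = m := by
      rw [← PS_of_ge le_rfl, ← hPS1 j le_rfl, hPSm]
    have hsum2 : (∑ i, (fun i : Fin j => p.2 ⟨(i : ℕ), by omega⟩) i) = m := by
      rw [← PS_of_ge le_rfl, ← hPS2 j le_rfl, ← hcuteq, hPSm]
    have htot1 : ∑ i, p.1 i = n := hc1.2
    have htot2 : ∑ i, p.2 i = n := hc2.2
    rw [← he1, sum_combine] at htot1
    rw [← he2, sum_combine] at htot2
    simp only [Finset.mem_product, mem_irrFinset, mem_pairFinset, isIrreduciblePair_iff]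
    refine ⟨⟨⟨fun i => hc1.1 _, hsum1⟩, ⟨fun i => hc2.1 _, hsum2⟩, ?_⟩,
      ⟨fun i => hc1.1 _, ?_⟩, fun i => hc2.1 _, ?_⟩
    · intro t ht1 htj
      rw [← hPS1 t (by omega), ← hPS2 t (by omega)]
      exact hcutmin t ht1 htj
    · beta_reduce at htot1 hsum1 ⊢
      omega
    · beta_reduce at htot2 hsum2 ⊢
      omega
  · -- backward membership
    intro q hq
    simp only [Finset.mem_product, mem_irrFinset, mem_pairFinset, isIrreduciblePair_iff] at hq
    obtain ⟨⟨ha1, ha2, hirr⟩, hcc1, hcc2⟩ := hq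
    have hpos1 : ∀ i, 0 < combine hjk q.1.1 q.2.1 i := by
      intro i
      by_cases h : (i : ℕ) < j
      · rw [combine_pos hjk _ _ i h]; exact ha1.1 _
      · rw [combine_neg hjk _ _ i h]; exact hcc1.1 _
    have hpos2 : ∀ i, 0 < combine hjk q.1.2 q.2.2 i := by
      intro i
      by_cases h : (i : ℕ) < j
      · rw [combine_pos hjk _ _ i h]; exact ha2.1 _
      · rw [combine_neg hjk _ _ i h]; exact hcc2.1 _
    have hsum1 : ∑ i, combine hjk q.1.1 q.2.1 i = n := by
      rw [sum_combine, ha1.2, hcc1.2]; omega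
    have hsum2 : ∑ i, combine hjk q.1.2 q.2.2 i = n := by
      rw [sum_combine, ha2.2, hcc2.2]; omega
    have hPSj1 : PS j (combine hjk q.1.1 q.2.1) = m := by
      rw [PS_combine_le hjk _ _ le_rfl, PS_of_ge le_rfl, ha1.2]
    have hPSj2 : PS j (combine hjk q.1.2 q.2.2) = m := by
      rw [PS_combine_le hjk _ _ le_rfl, PS_of_ge le_rfl, ha2.2]
    have hcut : cutF (combine hjk q.1.1 q.2.1, combine hjk q.1.2 q.2.2) = j := by
      apply cut_eq_of hj1
      · show PS j (combine hjk q.1.1 q.2.1) = PS j (combine hjk q.1.2 q.2.2)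
        rw [hPSj1, hPSj2]
      · intro t ht1 htj
        show PS t (combine hjk q.1.1 q.2.1) ≠ PS t (combine hjk q.1.2 q.2.2)
        rw [PS_combine_le hjk _ _ (by omega), PS_combine_le hjk _ _ (by omega)]
        exact hirr t ht1 htj
    simp only [Finset.mem_filter, mem_pairFinset, Prod.mk.injEq]
    exact ⟨⟨⟨hpos1, hsum1⟩, hpos2, hsum2⟩, by rw [hcut]; exact hPSj1, hcut⟩
  · -- left inverse
    intro p hp
    have he1 := combine_extract hjk p.1
    have he2 := combine_extract hjk p.2
    exact Prod.ext he1 he2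
  · -- right inverse
    intro q hq
    refine Prod.ext (Prod.ext ?_ ?_) (Prod.ext ?_ ?_) <;>
      · funext i
        first
        | exact combine_left hjk _ _ i
        | exact combine_right hjk _ _ i

/-! Lemma A: the recurrence for pairs of compositions -/

lemma lemmaA {n k : ℕ} (hn : 1 ≤ n) (hk : 1 ≤ k) :
    (pairFinset n k).card =
      ∑ x ∈ Finset.Icc 1 n ×ˢ Finset.Icc 1 k,
        (irrFinset x.1 x.2).card * (pairFinset (n - x.1) (k - x.2)).card := by
  have hmaps : ∀ p ∈ pairFinset n k,
      (PS (cutF p) p.1, cutF p) ∈ Finset.Icc 1 n ×ˢ Finset.Icc 1 k := by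
    intro p hp
    rw [mem_pairFinset] at hp
    obtain ⟨hcut1, hcutk, _, _⟩ := cut_facts hk hp.1 hp.2
    simp only [Finset.mem_product, Finset.mem_Icc]
    have hb0 : 1 ≤ PS 1 p.1 := by
      rw [PS_one hk]
      exact hp.1.1 _
    have h1 : 1 ≤ PS (cutF p) p.1 := le_trans hb0 (PS_mono hcut1 p.1)
    have h2 : PS (cutF p) p.1 ≤ n := by
      calc PS (cutF p) p.1 ≤ PS k p.1 := PS_mono hcutk p.1
      _ = n := by rw [PS_of_ge le_rfl, hp.1.2]
    exact ⟨⟨h1, h2⟩, hcut1, hcutk⟩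
  rw [Finset.card_eq_sum_card_fiberwise hmaps]
  refine Finset.sum_congr rfl fun x hx => ?_
  simp only [Finset.mem_product, Finset.mem_Icc] at hx
  exact card_fiber hx.2.1 hx.2.2 hx.1.1 hx.1.2

/-! Tuples of (m, j) pairs -/

def tupFinset (r N K : ℕ) : Finset (Fin r → ℕ × ℕ) :=
  (Fintype.piFinset fun _ : Fin r => Finset.Icc 1 N ×ˢ Finset.Icc 1 K).filter
    (fun c => (∑ i, (c i).1) = N ∧ (∑ i, (c i).2) = K)

lemma mem_tupFinset {r N K : ℕ} {c : Fin r → ℕ × ℕ} :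
    c ∈ tupFinset r N K ↔
      (∀ i, 1 ≤ (c i).1 ∧ 1 ≤ (c i).2) ∧ (∑ i, (c i).1) = N ∧ (∑ i, (c i).2) = K := by
  unfold tupFinset
  simp only [Finset.mem_filter, Fintype.mem_piFinset, Finset.mem_product, Finset.mem_Icc]
  constructor
  · rintro ⟨h1, h2, h3⟩
    exact ⟨fun i => ⟨(h1 i).1.1, (h1 i).2.1⟩, h2, h3⟩
  · rintro ⟨h1, h2, h3⟩
    refine ⟨fun i => ⟨⟨(h1 i).1, ?_⟩, (h1 i).2, ?_⟩, h2, h3⟩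
    · rw [← h2]
      exact Finset.single_le_sum (f := fun i => (c i).1) (fun _ _ => Nat.zero_le _)
        (Finset.mem_univ i)
    · rw [← h3]
      exact Finset.single_le_sum (f := fun i => (c i).2) (fun _ _ => Nat.zero_le _)
        (Finset.mem_univ i)

lemma le_of_mem_tupFinset {r N K : ℕ} {c : Fin r → ℕ × ℕ} (h : c ∈ tupFinset r N K) :
    r ≤ N ∧ r ≤ K := by
  rw [mem_tupFinset] at h
  constructor
  · rw [← h.2.1]
    calc r = ∑ _i : Fin r, 1 := by simp
    _ ≤ ∑ i, (c i).1 := Finset.sum_le_sum fun i _ => (h.1 i).1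
  · rw [← h.2.2]
    calc r = ∑ _i : Fin r, 1 := by simp
    _ ≤ ∑ i, (c i).2 := Finset.sum_le_sum fun i _ => (h.1 i).2

lemma tupFinset_one {N K : ℕ} (hN : 1 ≤ N) (hK : 1 ≤ K) :
    tupFinset 1 N K = {fun _ => (N, K)} := by
  ext c
  simp only [mem_tupFinset, Finset.mem_singleton, Fin.sum_univ_one]
  constructor
  · rintro ⟨h1, h2, h3⟩
    funext i
    rw [Subsingleton.elim i 0]
    exact Prod.ext h2 h3
  · rintro rfl
    exact ⟨fun _ => ⟨hN, hK⟩, rfl, rfl⟩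

def RHSsum (N K : ℕ) : ℕ :=
  ∑ r ∈ Finset.Icc 1 K, ∑ c ∈ tupFinset r N K, ∏ i, (irrFinset (c i).1 (c i).2).card

lemma RHSsum_zero_right {N : ℕ} : RHSsum N 0 = 0 := by
  unfold RHSsum
  simp

lemma RHSsum_zero_left {K : ℕ} : RHSsum 0 K = 0 := by
  unfold RHSsum
  apply Finset.sum_eq_zero
  intro r hr
  simp only [Finset.mem_Icc] at hr
  apply Finset.sum_eq_zero
  intro c hc
  have := (le_of_mem_tupFinset hc).1
  omega

lemma peel (F : ℕ × ℕ → ℕ) (r N K : ℕ) :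
    ∑ c ∈ tupFinset (r + 1) N K, ∏ i, F (c i)
      = ∑ x ∈ Finset.Icc 1 N ×ˢ Finset.Icc 1 K,
          F x * ∑ c' ∈ tupFinset r (N - x.1) (K - x.2), ∏ i, F (c' i) := by
  have hmaps : ∀ c ∈ tupFinset (r + 1) N K, c 0 ∈ Finset.Icc 1 N ×ˢ Finset.Icc 1 K := by
    intro c hc
    rw [mem_tupFinset] at hc
    simp only [Finset.mem_product, Finset.mem_Icc]
    have h1 := (hc.1 0).1
    have h2 := (hc.1 0).2
    have h3 : (c 0).1 ≤ ∑ i, (c i).1 :=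
      Finset.single_le_sum (f := fun i => (c i).1) (fun _ _ => Nat.zero_le _) (Finset.mem_univ 0)
    have h4 : (c 0).2 ≤ ∑ i, (c i).2 :=
      Finset.single_le_sum (f := fun i => (c i).2) (fun _ _ => Nat.zero_le _) (Finset.mem_univ 0)
    rw [hc.2.1] at h3
    rw [hc.2.2] at h4
    exact ⟨⟨h1, h3⟩, h2, h4⟩
  rw [← Finset.sum_fiberwise_of_maps_to hmaps (fun c => ∏ i, F (c i))]
  refine Finset.sum_congr rfl fun x hx => ?_
  simp only [Finset.mem_product, Finset.mem_Icc] at hx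
  rw [Finset.mul_sum]
  refine Finset.sum_bij' (fun c _ => fun i : Fin r => c i.succ)
    (fun c' _ => Fin.cons x c') ?_ ?_ ?_ ?_ ?_
  · intro c hc
    simp only [Finset.mem_filter, mem_tupFinset] at hc
    obtain ⟨⟨h1, h2, h3⟩, h0⟩ := hc
    rw [Fin.sum_univ_succ] at h2 h3
    rw [mem_tupFinset]
    refine ⟨fun i => h1 i.succ, ?_, ?_⟩ <;>
      · beta_reduce
        rw [h0] at h2 h3
        omega
  · intro c' hc'
    rw [mem_tupFinset] at hc'
    obtain ⟨h1, h2, h3⟩ := hc'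
    simp only [Finset.mem_filter, mem_tupFinset, Fin.cons_zero]
    refine ⟨⟨?_, ?_, ?_⟩, trivial⟩
    · intro i
      rcases Fin.eq_zero_or_eq_succ i with rfl | ⟨i', rfl⟩
      · simpa using ⟨hx.1.1, hx.2.1⟩
      · simpa using h1 i'
    · rw [Fin.sum_univ_succ]
      simp only [Fin.cons_zero, Fin.cons_succ]
      beta_reduce at h2
      omega
    · rw [Fin.sum_univ_succ]
      simp only [Fin.cons_zero, Fin.cons_succ]
      beta_reduce at h3
      omega
  · intro c hc
    simp only [Finset.mem_filter] at hc
    funext i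
    rcases Fin.eq_zero_or_eq_succ i with rfl | ⟨i', rfl⟩
    · simpa using hc.2.symm
    · simp
  · intro c' _
    funext i
    simp
  · intro c hc
    simp only [Finset.mem_filter] at hc
    rw [Fin.prod_univ_succ, hc.2]

lemma lemmaB {N K : ℕ} (hN : 1 ≤ N) (hK : 1 ≤ K) :
    RHSsum N K = (irrFinset N K).card
      + ∑ x ∈ Finset.Icc 1 N ×ˢ Finset.Icc 1 K,
          (irrFinset x.1 x.2).card * RHSsum (N - x.1) (K - x.2) := by
  have h1 : (∑ c ∈ tupFinset 1 N K, ∏ i, (irrFinset (c i).1 (c i).2).card)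
      = (irrFinset N K).card := by
    rw [tupFinset_one hN hK, Finset.sum_singleton, Fin.prod_univ_one]
  have h2 : (∑ r ∈ Finset.Icc 2 K, ∑ c ∈ tupFinset r N K,
        ∏ i, (irrFinset (c i).1 (c i).2).card)
      = ∑ x ∈ Finset.Icc 1 N ×ˢ Finset.Icc 1 K,
          (irrFinset x.1 x.2).card * RHSsum (N - x.1) (K - x.2) := by
    clear h1
    have hmap : Finset.Icc 2 K = (Finset.Icc 1 (K - 1)).map (addRightEmbedding 1) := by
      rw [Finset.map_add_right_Icc, Nat.sub_add_cancel hK]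
    rw [hmap, Finset.sum_map]
    show ∑ x ∈ Finset.Icc 1 (K - 1), ∑ c ∈ tupFinset (x + 1) N K, ∏ i, (irrFinset (c i).1 (c i).2).card = _
    have hpeel : ∀ r ∈ Finset.Icc 1 (K - 1),
        (∑ c ∈ tupFinset (r + 1) N K, ∏ i, (irrFinset (c i).1 (c i).2).card)
          = ∑ x ∈ Finset.Icc 1 N ×ˢ Finset.Icc 1 K,
              (irrFinset x.1 x.2).card *
                ∑ c' ∈ tupFinset r (N - x.1) (K - x.2),
                  ∏ i, (irrFinset (c' i).1 (c' i).2).card := by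
      intro r _
      exact peel (fun q => (irrFinset q.1 q.2).card) r N K
    rw [Finset.sum_congr rfl hpeel, Finset.sum_comm]
    clear hpeel
    refine Finset.sum_congr rfl fun x hx => ?_
    rw [← Finset.mul_sum]
    congr 1
    simp only [Finset.mem_product, Finset.mem_Icc] at hx
    symm
    unfold RHSsum
    apply Finset.sum_subset
    · intro r hr
      simp only [Finset.mem_Icc] at hr ⊢
      omega
    · intro r hr1 hr2
      simp only [Finset.mem_Icc] at hr1 hr2
      apply Finset.sum_eq_zero
      intro c hc
      exfalso
      have := (le_of_mem_tupFinset hc).2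
      omega
  have hsplit : Finset.Icc 1 K = insert 1 (Finset.Icc 2 K) := by
    clear h1 h2
    ext r
    simp only [Finset.mem_Icc, Finset.mem_insert]
    omega
  conv_lhs => rw [RHSsum, hsplit]
  rw [Finset.sum_insert (by simp), h1, h2]

/-! Cardinality facts for degenerate pair finsets -/

lemma card_pair_zero_zero : (pairFinset 0 0).card = 1 := by
  unfold pairFinset
  rw [Finset.card_product, compFinset_zero_zero]
  simp

lemma card_pair_left_zero {y : ℕ} (hy : 1 ≤ y) : (pairFinset 0 y).card = 0 := by
  unfold pairFinset
  rw [Finset.card_product, compFinset_zero_pos hy rfl]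
  simp

lemma card_pair_right_zero {x : ℕ} (hx : 1 ≤ x) : (pairFinset x 0).card = 0 := by
  unfold pairFinset
  rw [Finset.card_product, compFinset_pos_zero hx]
  simp

/-! Main induction -/

lemma main_eq : ∀ N, 1 ≤ N → ∀ K, 1 ≤ K → (pairFinset N K).card = RHSsum N K := by
  intro N
  induction N using Nat.strong_induction_on with
  | _ N ih =>
    intro hN K hK
    rw [lemmaA hN hK, lemmaB hN hK]
    have hmem : ((N, K) : ℕ × ℕ) ∈ Finset.Icc 1 N ×ˢ Finset.Icc 1 K := by
      simp only [Finset.mem_product, Finset.mem_Icc]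
      omega
    rw [← Finset.sum_erase_add _ _ hmem, ← Finset.sum_erase_add _
      (fun x => (irrFinset x.1 x.2).card * RHSsum (N - x.1) (K - x.2)) hmem]
    have hcong : ∀ x ∈ (Finset.Icc 1 N ×ˢ Finset.Icc 1 K).erase (N, K),
        (irrFinset x.1 x.2).card * (pairFinset (N - x.1) (K - x.2)).card
          = (irrFinset x.1 x.2).card * RHSsum (N - x.1) (K - x.2) := by
      intro x hx
      rw [Finset.mem_erase] at hx
      obtain ⟨hne, hx⟩ := hx
      simp only [Finset.mem_product, Finset.mem_Icc] at hx
      have hne' : x.1 ≠ N ∨ x.2 ≠ K := by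
        by_contra h
        push_neg at h
        exact hne (Prod.ext h.1 h.2)
      rcases Nat.lt_or_ge x.1 N with hx1 | hx1
      · rcases Nat.lt_or_ge x.2 K with hx2 | hx2
        · rw [ih (N - x.1) (by omega) (by omega) (K - x.2) (by omega)]
        · have : K - x.2 = 0 := by omega
          rw [this, card_pair_right_zero (by omega), RHSsum_zero_right]
      · have h1 : N - x.1 = 0 := by omega
        have h2 : 1 ≤ K - x.2 := by
          rcases hne' with h | h
          · omega
          · omega
        rw [h1, card_pair_left_zero h2, RHSsum_zero_left]
    rw [Finset.sum_congr rfl hcong]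
    have e1 : N - N = 0 := Nat.sub_self N
    have e2 : K - K = 0 := Nat.sub_self K
    rw [e1, e2, card_pair_zero_zero, mul_one, RHSsum_zero_right, mul_zero, add_zero]
    exact Nat.add_comm _ _

/-! Connecting to `Nat.card` -/


lemma numIrr_eq (n k : ℕ) : numIrreduciblePairsK n k = (irrFinset n k).card := by
  have hset : {p : (Fin k → ℕ) × (Fin k → ℕ) | IsIrreduciblePair n k p.1 p.2}
      = ↑(irrFinset n k) := by
    ext p
    simp [mem_irrFinset]
  calc numIrreduciblePairsK n k
      = Nat.card ↥{p : (Fin k → ℕ) × (Fin k → ℕ) | IsIrreduciblePair n k p.1 p.2} := rfl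
    _ = Set.ncard {p : (Fin k → ℕ) × (Fin k → ℕ) | IsIrreduciblePair n k p.1 p.2} :=
        Nat.card_coe_set_eq _
    _ = (irrFinset n k).card := by rw [hset, Set.ncard_coe_finset]

/-! The main theorem -/

/-- **Decomposition of pairs of compositions into irreducible pairs**:
for `n, k ≥ 1`,
`C(n-1, k-1)² = ∑_{r≥1} ∑ f(m₁,k₁) ⋯ f(m_r,k_r)`, the inner sum over tuples of
positive integers with `m₁+⋯+m_r = n` and `k₁+⋯+k_r = k` (necessarily
`1 ≤ r ≤ k`). -/
theorem pairs_decompose_into_irreducible (n k : ℕ) (hn : 1 ≤ n) (hk : 1 ≤ k) :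
    (Nat.choose (n - 1) (k - 1)) ^ 2 =
      ∑ r ∈ Finset.Icc 1 k,
        ∑ c ∈ (Fintype.piFinset fun _ : Fin r =>
            Finset.Icc 1 n ×ˢ Finset.Icc 1 k).filter
            (fun c => (∑ i, (c i).1) = n ∧ (∑ i, (c i).2) = k),
          ∏ i, numIrreduciblePairsK (c i).1 (c i).2 := by
  have h0 : (pairFinset n k).card = ((n - 1).choose (k - 1)) ^ 2 := by
    unfold pairFinset
    rw [Finset.card_product, card_compFinset hn hk, sq]
  calc ((n - 1).choose (k - 1)) ^ 2
      = (pairFinset n k).card := h0.symm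
    _ = RHSsum n k := main_eq n hn k hk
    _ = _ := by
        refine Finset.sum_congr rfl fun r _ => Finset.sum_congr rfl fun c _ =>
          Finset.prod_congr rfl fun i _ => (numIrr_eq _ _).symm
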